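/- arXiv:2102.10299 — 4 statements merged into one kernel-verified Lean document; each statement's English description precedes it below -/
import Mathlib

section
/- A proper ideal I of a commutative ring R is a quasi J-ideal if and only if for all a, b in R with ab ∈ I, either a ∈ J(R) or b ∈ √I. -/
def IsJIdeal {R : Type*} [CommRing R] (I : Ideal R) : Prop :=
  I ≠ ⊤ ∧ ∀ a b : R, a * b ∈ I → a ∉ Ideal.jacobson (⊥ : Ideal R) → b ∈ I

def IsQuasiJIdeal {R : Type*} [CommRing R] (I : Ideal R) : Prop :=
  I ≠ ⊤ ∧ IsJIdeal I.radical

lemma pow_mem_jacobson_bot {R : Type*} [CommRing R] {a : R} {n : ℕ}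
    (h : a ^ n ∈ Ideal.jacobson (⊥ : Ideal R)) : a ∈ Ideal.jacobson (⊥ : Ideal R) := by
  rw [Ideal.jacobson, Ideal.mem_sInf] at h ⊢
  intro J hJ
  have := h hJ
  exact hJ.2.isPrime.mem_of_pow_mem n this

theorem stmt0 {R : Type*} [CommRing R] (I : Ideal R) (hI : I ≠ ⊤) :
    IsQuasiJIdeal I ↔
      ∀ a b : R, a * b ∈ I → a ∈ Ideal.jacobson (⊥ : Ideal R) ∨ b ∈ I.radical := by
  constructor
  · rintro ⟨-, -, hJ⟩ a b hab
    by_cases ha : a ∈ Ideal.jacobson (⊥ : Ideal R)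
    · exact Or.inl ha
    · exact Or.inr (hJ a b (Ideal.le_radical hab) ha)
  · intro h
    refine ⟨hI, ?_, ?_⟩
    · simpa [Ideal.radical_eq_top] using hI
    · intro a b hab ha
      obtain ⟨n, hn⟩ := hab
      rw [mul_pow] at hn
      rcases h (a ^ n) (b ^ n) hn with h1 | h1
      · exact absurd (pow_mem_jacobson_bot h1) ha
      · exact Ideal.radical_idem I ▸ (⟨n, h1⟩ : b ∈ I.radical.radical)
end

section
/- A proper ideal I of a commutative ring R is a quasi J-ideal if and only if for every element a ∈ R and every ideal K of R with aK ⊆ I, either a ∈ J(R) or K ⊆ √I. -/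
theorem stmt1 {R : Type*} [CommRing R] (I : Ideal R) (hI : I ≠ ⊤) :
    IsQuasiJIdeal I ↔
      ∀ (a : R) (K : Ideal R), (∀ x ∈ K, a * x ∈ I) →
        a ∈ Ideal.jacobson (⊥ : Ideal R) ∨ K ≤ I.radical := by
  have hJrad : ∀ (a : R) (n : ℕ), a ^ n ∈ Ideal.jacobson (⊥ : Ideal R) →
      a ∈ Ideal.jacobson (⊥ : Ideal R) := by
    intro a n h
    rw [Ideal.jacobson, Ideal.mem_sInf] at h ⊢
    intro m hm
    have hprime : m.IsPrime := hm.2.isPrime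
    exact hprime.mem_of_pow_mem n (h hm)
  constructor
  · rintro ⟨-, hne, hJ⟩ a K hK
    by_cases ha : a ∈ Ideal.jacobson (⊥ : Ideal R)
    · exact Or.inl ha
    · refine Or.inr fun x hx => hJ a x (Ideal.le_radical (hK x hx)) ha
  · intro h
    refine ⟨hI, ?_, ?_⟩
    · simpa [Ideal.radical_eq_top] using hI
    · intro a b hab ha
      obtain ⟨n, hn⟩ := hab
      have hn' : a ^ n * b ^ n ∈ I := by rwa [← mul_pow]
      have hK : ∀ x ∈ Ideal.span {b ^ n}, a ^ n * x ∈ I := by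
        intro x hx
        obtain ⟨c, rfl⟩ := Ideal.mem_span_singleton.mp hx
        rw [← mul_assoc]
        exact Ideal.mul_mem_right c I hn'
      rcases h (a ^ n) (Ideal.span {b ^ n}) hK with h1 | h1
      · exact absurd (hJrad a n h1) ha
      · have hb : b ^ n ∈ I.radical := h1 (Ideal.subset_span rfl)
        exact Ideal.mem_radical_of_pow_mem hb
end

section
/- A proper ideal I of a commutative ring R is a quasi J-ideal if and only if for all ideals K, L of R with KL ⊆ I, either K ⊆ J(R) or L ⊆ √I. -/
theorem stmt2 {R : Type*} [CommRing R] (I : Ideal R) (hI : I ≠ ⊤) :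
    IsQuasiJIdeal I ↔
      ∀ K L : Ideal R, K * L ≤ I →
        K ≤ Ideal.jacobson (⊥ : Ideal R) ∨ L ≤ I.radical := by
  constructor
  · rintro ⟨-, -, hJ⟩ K L hKL
    by_cases hK : K ≤ Ideal.jacobson (⊥ : Ideal R)
    · exact Or.inl hK
    · right
      obtain ⟨a, haK, haJ⟩ := SetLike.not_le_iff_exists.mp hK
      intro b hbL
      exact hJ a b (Ideal.le_radical (hKL (Ideal.mul_mem_mul haK hbL))) haJ
  · intro h
    refine ⟨hI, ?_, ?_⟩
    · intro habs
      exact hI (Ideal.radical_eq_top.mp habs)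
    · intro a b hab haJ
      obtain ⟨n, hn⟩ := hab
      have hKL : Ideal.span {a ^ n} * Ideal.span {b ^ n} ≤ I := by
        rw [Ideal.span_singleton_mul_span_singleton, Ideal.span_singleton_le_iff_mem]
        simpa [mul_pow] using hn
      rcases h _ _ hKL with hK | hL
      · exact absurd ((Ideal.isRadical_jacobson (⊥ : Ideal R))
          ⟨n, hK (Ideal.mem_span_singleton_self _)⟩) haJ
      · obtain ⟨m, hm⟩ := hL (Ideal.mem_span_singleton_self _)
        exact ⟨n * m, by rwa [pow_mul]⟩
end

section
/- A commutative ring R is quasi presimplifiable if and only if every element a ∈ R with Ann(a) ⊄ N(R) lies in J(R); equivalently, NZ(R) ⊆ J(R), where NZ(R) is the set of elements whose annihilator is not contained in the nilradical. -/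
def QuasiPresimplifiable (R : Type*) [CommRing R] : Prop :=
  ∀ a b : R, a = a * b → a ∈ nilradical R ∨ IsUnit b

theorem stmt18 {R : Type*} [CommRing R] :
    QuasiPresimplifiable R ↔
      ∀ a : R, ¬ ({x : R | x * a = 0} ⊆ (nilradical R : Set R)) →
        a ∈ Ideal.jacobson (⊥ : Ideal R) := by
  constructor
  · intro hqp a ha
    rw [Ideal.mem_jacobson_bot]
    intro y
    rw [Set.not_subset] at ha
    obtain ⟨x, hx, hxn⟩ := ha
    have hx' : x * a = 0 := hx
    have heq : x = x * (a * y + 1) := by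
      have : x * (a * y + 1) = x * a * y + x := by ring
      rw [this, hx', zero_mul, zero_add]
    rcases hqp x (a * y + 1) heq with h1 | h2
    · exact absurd h1 hxn
    · exact h2
  · intro h a b hab
    by_cases hn : a ∈ nilradical R
    · exact Or.inl hn
    · right
      have h0 : a * (1 - b) = 0 := by rw [mul_sub, ← hab]; ring
      have hns : ¬ ({x : R | x * (1 - b) = 0} ⊆ (nilradical R : Set R)) := by
        intro hs
        exact hn (hs h0)
      have hj := h _ hns
      rw [Ideal.mem_jacobson_bot] at hj
      have := hj (-1)
      simpa using this
end
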